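/- If either 0 < u < v < 1, or 1 < u < v, then the function f(x) = (1 − u^x)/(1 − v^x) is strictly decreasing on (0, ∞). -/

import Mathlib

open Real Set

private noncomputable def phiF (s : ℝ) : ℝ := s * Real.exp s / (1 - Real.exp s)

private lemma phi_hasDeriv {s : ℝ} (hs : s ≠ 0) :
    HasDerivAt phiF
      (((1 * Real.exp s + s * Real.exp s) * (1 - Real.exp s) -
        s * Real.exp s * (0 - Real.exp s)) / (1 - Real.exp s) ^ 2) s := by
  have hden : 1 - Real.exp s ≠ 0 := by
    intro h
    exact hs ((Real.exp_eq_one_iff _).mp (by linarith))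
  exact ((hasDerivAt_id s).mul (Real.hasDerivAt_exp s)).div
    ((hasDerivAt_const s 1).sub (Real.hasDerivAt_exp s)) hden

private lemma phi_deriv_neg {s : ℝ} (hs : s ≠ 0) : deriv phiF s < 0 := by
  have hden : 1 - Real.exp s ≠ 0 := by
    intro h
    exact hs ((Real.exp_eq_one_iff _).mp (by linarith))
  rw [(phi_hasDeriv hs).deriv]
  apply div_neg_of_neg_of_pos
  · have h1 : s + 1 < Real.exp s := Real.add_one_lt_exp hs
    have h2 : 0 < Real.exp s := Real.exp_pos s
    nlinarith
  · exact pow_two_pos_of_ne_zero hden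

private lemma phi_cont {t : Set ℝ} (ht : ∀ s ∈ t, s ≠ 0) : ContinuousOn phiF t := by
  apply ContinuousOn.div
  · fun_prop
  · fun_prop
  · intro s hs h
    exact ht s hs ((Real.exp_eq_one_iff _).mp (by linarith))

private lemma phi_anti_neg : StrictAntiOn phiF (Iio 0) := by
  apply strictAntiOn_of_deriv_neg (convex_Iio 0) (phi_cont fun s hs => ne_of_lt hs)
  intro s hs
  rw [interior_Iio] at hs
  exact phi_deriv_neg (ne_of_lt hs)

private lemma phi_anti_pos : StrictAntiOn phiF (Ioi 0) := by
  apply strictAntiOn_of_deriv_neg (convex_Ioi 0) (phi_cont fun s hs => ne_of_gt hs)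
  intro s hs
  rw [interior_Ioi] at hs
  exact phi_deriv_neg (ne_of_gt hs)

private lemma key_ineq {a b : ℝ} (hab : a < b) (h : b < 0 ∨ 0 < a) :
    b * Real.exp b * (1 - Real.exp a) < a * Real.exp a * (1 - Real.exp b) := by
  rcases h with hb | ha
  · have ha : a < 0 := hab.trans hb
    have hphi : phiF b < phiF a := phi_anti_neg ha hb hab
    have h1 : 0 < 1 - Real.exp a := by
      have := Real.exp_lt_one_iff.mpr ha; linarith
    have h2 : 0 < 1 - Real.exp b := by
      have := Real.exp_lt_one_iff.mpr hb; linarith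
    have := (div_lt_div_iff₀ h2 h1).mp hphi
    linarith
  · have hb : 0 < b := ha.trans hab
    have hphi : phiF b < phiF a := phi_anti_pos ha hb hab
    have h1 : 0 < Real.exp a - 1 := by
      nlinarith [Real.add_one_lt_exp (ne_of_gt ha)]
    have h2 : 0 < Real.exp b - 1 := by
      nlinarith [Real.add_one_lt_exp (ne_of_gt hb)]
    have e1 : phiF b = (-(b * Real.exp b)) / (Real.exp b - 1) := by
      unfold phiF; rw [div_eq_div_iff (by linarith) (by linarith)]; ring
    have e2 : phiF a = (-(a * Real.exp a)) / (Real.exp a - 1) := by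
      unfold phiF; rw [div_eq_div_iff (by linarith) (by linarith)]; ring
    rw [e1, e2] at hphi
    have := (div_lt_div_iff₀ h2 h1).mp hphi
    nlinarith

theorem frolov_lemma1 (u v : ℝ)
    (h : (0 < u ∧ u < v ∧ v < 1) ∨ (1 < u ∧ u < v)) :
    StrictAntiOn (fun x : ℝ => (1 - u ^ x) / (1 - v ^ x)) (Set.Ioi (0 : ℝ)) := by
  have hu : 0 < u := by rcases h with ⟨h1, _, _⟩ | ⟨h1, _⟩ <;> linarith
  have hv : 0 < v := by rcases h with ⟨h1, h2, _⟩ | ⟨h1, h2⟩ <;> linarith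
  have hlog : Real.log u < Real.log v := by
    rcases h with ⟨h1, h2, _⟩ | ⟨h1, h2⟩ <;> exact Real.log_lt_log (by linarith) h2
  have hside : ∀ x : ℝ, 0 < x → Real.log v * x < 0 ∨ 0 < Real.log u * x := by
    intro x hx
    rcases h with ⟨h1, h2, h3⟩ | ⟨h1, h2⟩
    · left; exact mul_neg_of_neg_of_pos (Real.log_neg (by linarith) h3) hx
    · right; exact mul_pos (Real.log_pos h1) hx
  have hlv : Real.log v ≠ 0 := by
    rcases h with ⟨h1, h2, h3⟩ | ⟨h1, h2⟩
    · exact ne_of_lt (Real.log_neg (by linarith) h3)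
    · exact ne_of_gt (Real.log_pos (by linarith))
  have hden : ∀ x : ℝ, 0 < x → 1 - Real.exp (Real.log v * x) ≠ 0 := by
    intro x hx h0
    have h1 : Real.log v * x = 0 := (Real.exp_eq_one_iff _).mp (by linarith)
    rcases mul_eq_zero.mp h1 with h' | h'
    · exact hlv h'
    · exact hx.ne' h'
  have hG : StrictAntiOn
      (fun x : ℝ => (1 - Real.exp (Real.log u * x)) / (1 - Real.exp (Real.log v * x)))
      (Ioi (0:ℝ)) := by
    apply strictAntiOn_of_deriv_neg (convex_Ioi 0)
    · apply ContinuousOn.div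
      · fun_prop
      · fun_prop
      · intro x hx; exact hden x hx
    · intro x hx
      rw [interior_Ioi] at hx
      have h1u : HasDerivAt (fun x : ℝ => Real.log u * x) (Real.log u * 1) x :=
        (hasDerivAt_id x).const_mul _
      have h1v : HasDerivAt (fun x : ℝ => Real.log v * x) (Real.log v * 1) x :=
        (hasDerivAt_id x).const_mul _
      have hNu : HasDerivAt (fun x : ℝ => 1 - Real.exp (Real.log u * x))
          (0 - Real.exp (Real.log u * x) * (Real.log u * 1)) x :=
        (hasDerivAt_const x 1).sub h1u.exp
      have hNv : HasDerivAt (fun x : ℝ => 1 - Real.exp (Real.log v * x))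
          (0 - Real.exp (Real.log v * x) * (Real.log v * 1)) x :=
        (hasDerivAt_const x 1).sub h1v.exp
      have hd := hNu.div hNv (hden x hx)
      rw [show (fun x : ℝ => (1 - Real.exp (Real.log u * x)) / (1 - Real.exp (Real.log v * x))) = (fun x : ℝ => 1 - Real.exp (Real.log u * x)) / (fun x : ℝ => 1 - Real.exp (Real.log v * x)) from rfl, hd.deriv]
      apply div_neg_of_neg_of_pos _ (pow_two_pos_of_ne_zero (hden x hx))
      have key := key_ineq (a := Real.log u * x) (b := Real.log v * x)
        (mul_lt_mul_of_pos_right hlog hx) (hside x hx)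
      have h4 : x * ((0 - Real.exp (Real.log u * x) * (Real.log u * 1)) *
            (1 - Real.exp (Real.log v * x)) -
          (1 - Real.exp (Real.log u * x)) *
            (0 - Real.exp (Real.log v * x) * (Real.log v * 1))) < x * 0 := by
        have hring : x * ((0 - Real.exp (Real.log u * x) * (Real.log u * 1)) *
              (1 - Real.exp (Real.log v * x)) -
            (1 - Real.exp (Real.log u * x)) *
              (0 - Real.exp (Real.log v * x) * (Real.log v * 1))) =
            Real.log v * x * Real.exp (Real.log v * x) * (1 - Real.exp (Real.log u * x)) -
            Real.log u * x * Real.exp (Real.log u * x) * (1 - Real.exp (Real.log v * x)) := by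
          ring
        rw [hring, mul_zero]
        linarith
      exact lt_of_mul_lt_mul_left h4 hx.le
  intro x hx y hy hxy
  have hgxy := hG hx hy hxy
  simpa [Real.rpow_def_of_pos hu, Real.rpow_def_of_pos hv] using hgxy
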